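/- Let Ω be a Polish (or general measurable) space, let m be a finite positive Borel measure on Ω, and let f : ℝ → ℝ be convex and nonnegative with f defined on [0, ∞). Define the internal energy H(μ) = ∫⁻ ENNReal.ofReal (f((∂μ/∂m)(x).toReal)) dm(x) ∈ [0, ∞] for a finite measure μ absolutely continuous with respect to m, where ∂μ/∂m is the Radon–Nikodym derivative. Let μ₁, μ₂ be finite measures with μ₁ ≪ m and μ₂ ≪ m, and let μ₁', μ₂' be finite measures such that μ₁ ⊓ μ₂ ≤ μ₁' ≤ μ₁ ⊔ μ₂, μ₁ ⊓ μ₂ ≤ μ₂' ≤ μ₁ ⊔ μ₂, and μ₁' + μ₂' = μ₁ + μ₂ (so μ₁', μ₂' ≪ m as well). Then H(μ₁') + H(μ₂') ≤ H(μ₁) + H(μ₂) in [0, ∞]. (This is the total substitutability of the internal energy H_{f,m}.) -/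

import Mathlib

open MeasureTheory

/-- Pointwise convexity inequality: if `a ≤ x ≤ b` and `x + y = a + b`, then
`f x + f y ≤ f a + f b` for `f` convex on `[0, ∞)`. -/
lemma aux_convex_add_le (f : ℝ → ℝ) (hconv : ConvexOn ℝ (Set.Ici 0) f)
    {a b x y : ℝ} (ha : 0 ≤ a) (hab : a ≤ b)
    (hax : a ≤ x) (hxb : x ≤ b) (hxy : x + y = a + b) :
    f x + f y ≤ f a + f b := by
  have hb : 0 ≤ b := ha.trans hab
  rcases eq_or_lt_of_le hab with rfl | hlt
  · have hx : x = a := le_antisymm hxb hax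
    have hy : y = a := by linarith
    simp [hx, hy]
  · set t : ℝ := (b - x) / (b - a) with ht_def
    have hba : (0:ℝ) < b - a := by linarith
    have ht0 : 0 ≤ t := div_nonneg (by linarith) hba.le
    have ht1 : t ≤ 1 := by
      rw [div_le_one hba]; linarith
    have hxt : t * a + (1 - t) * b = x := by
      have h' : t * (b - a) = b - x := by rw [ht_def]; exact div_mul_cancel₀ _ hba.ne'
      linear_combination -h'
    have hyt : (1 - t) * a + t * b = y := by
      have : y = a + b - x := by linarith
      rw [this, ← hxt]; ring
    have h1 : f x ≤ t * f a + (1 - t) * f b := by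
      have := hconv.2 (Set.mem_Ici.mpr ha) (Set.mem_Ici.mpr hb) ht0 (by linarith)
        (by linarith : t + (1 - t) = 1)
      simpa [smul_eq_mul, hxt] using this
    have h2 : f y ≤ (1 - t) * f a + t * f b := by
      have := hconv.2 (Set.mem_Ici.mpr ha) (Set.mem_Ici.mpr hb) (by linarith : (0:ℝ) ≤ 1 - t)
        ht0 (by ring : (1 - t) + t = 1)
      simpa [smul_eq_mul, hyt] using this
    nlinarith

/-- Monotonicity of Radon–Nikodym derivatives. -/
lemma aux_rnDeriv_mono {Ω : Type*} [MeasurableSpace Ω] {μ ν m : Measure Ω}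
    [IsFiniteMeasure ν] [IsFiniteMeasure m] (hνm : ν ≪ m) (h : μ ≤ ν) :
    μ.rnDeriv m ≤ᵐ[m] ν.rnDeriv m := by
  refine ae_le_of_forall_setLIntegral_le_of_sigmaFinite₀
    (μ.measurable_rnDeriv m).aemeasurable fun s hs _ => ?_
  calc ∫⁻ x in s, μ.rnDeriv m x ∂m ≤ μ s := Measure.setLIntegral_rnDeriv_le s
    _ ≤ ν s := h s
    _ = ∫⁻ x in s, ν.rnDeriv m x ∂m := (Measure.setLIntegral_rnDeriv' hνm hs).symm

/-- Measurability of `x ↦ ofReal (f (g x).toReal)` for `f` convex on `[0,∞)`. -/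
lemma aux_measurable {Ω : Type*} [MeasurableSpace Ω] (f : ℝ → ℝ)
    (hconv : ConvexOn ℝ (Set.Ici 0) f) {g : Ω → ENNReal} (hg : Measurable g) :
    Measurable fun x => ENNReal.ofReal (f ((g x).toReal)) := by
  classical
  have hcont : ContinuousOn f (Set.Ioi (0:ℝ)) := by
    have := hconv.continuousOn_interior
    rwa [interior_Ici] at this
  set F : ℝ → ℝ := (Set.Ioi (0:ℝ)).piecewise f (fun _ => f 0) with hF
  have hFmeas : Measurable F := by
    refine ContinuousOn.measurable_piecewise hcont ?_ measurableSet_Ioi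
    exact continuousOn_const
  have hFeq : ∀ x, F ((g x).toReal) = f ((g x).toReal) := by
    intro x
    rcases lt_or_eq_of_le (ENNReal.toReal_nonneg (a := g x)) with hpos | hzero
    · simp [hF, Set.piecewise, hpos]
    · simp [hF, Set.piecewise, ← hzero]
  have : (fun x => ENNReal.ofReal (f ((g x).toReal)))
      = fun x => ENNReal.ofReal (F ((g x).toReal)) := by
    ext x; rw [hFeq]
  rw [this]
  exact ENNReal.measurable_ofReal.comp (hFmeas.comp (hg.ennreal_toReal))

/-- Total substitutability of the internal energy
`H(μ) = ∫⁻ ofReal (f (dμ/dm)) dm` for a convex nonnegative `f`. -/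
theorem internalEnergy_totallySubstitutable
    {Ω : Type*} [MeasurableSpace Ω]
    (m : Measure Ω) [IsFiniteMeasure m]
    (f : ℝ → ℝ) (hconv : ConvexOn ℝ (Set.Ici 0) f)
    (hnonneg : ∀ s : ℝ, 0 ≤ s → 0 ≤ f s)
    (μ₁ μ₂ μ₁' μ₂' : Measure Ω)
    [IsFiniteMeasure μ₁] [IsFiniteMeasure μ₂]
    [IsFiniteMeasure μ₁'] [IsFiniteMeasure μ₂']
    (hac₁ : μ₁ ≪ m) (hac₂ : μ₂ ≪ m)
    (h₁l : μ₁ ⊓ μ₂ ≤ μ₁') (h₁u : μ₁' ≤ μ₁ ⊔ μ₂)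
    (h₂l : μ₁ ⊓ μ₂ ≤ μ₂') (h₂u : μ₂' ≤ μ₁ ⊔ μ₂)
    (hsum : μ₁' + μ₂' = μ₁ + μ₂) :
    (∫⁻ x, ENNReal.ofReal (f ((μ₁'.rnDeriv m x).toReal)) ∂m) +
      (∫⁻ x, ENNReal.ofReal (f ((μ₂'.rnDeriv m x).toReal)) ∂m) ≤
    (∫⁻ x, ENNReal.ofReal (f ((μ₁.rnDeriv m x).toReal)) ∂m) +
      (∫⁻ x, ENNReal.ofReal (f ((μ₂.rnDeriv m x).toReal)) ∂m) := by
  set g₁ := μ₁.rnDeriv m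
  set g₂ := μ₂.rnDeriv m
  have hg₁ : Measurable g₁ := μ₁.measurable_rnDeriv m
  have hg₂ : Measurable g₂ := μ₂.measurable_rnDeriv m
  -- the dominating measure ν = (g₁ ⊔ g₂) · m
  set G : Ω → ENNReal := fun x => max (g₁ x) (g₂ x) with hG
  have hGmeas : Measurable G := hg₁.max hg₂
  set ν : Measure Ω := m.withDensity G with hν
  have hνm : ν ≪ m := withDensity_absolutelyContinuous m G
  have hle₁ : μ₁ ≤ ν := by
    conv_lhs => rw [← Measure.withDensity_rnDeriv_eq μ₁ m hac₁]
    exact withDensity_mono (Filter.Eventually.of_forall fun x => le_max_left _ _)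
  have hle₂ : μ₂ ≤ ν := by
    conv_lhs => rw [← Measure.withDensity_rnDeriv_eq μ₂ m hac₂]
    exact withDensity_mono (Filter.Eventually.of_forall fun x => le_max_right _ _)
  have hνle : ν ≤ μ₁ + μ₂ := by
    have : ν ≤ m.withDensity (fun x => g₁ x + g₂ x) :=
      withDensity_mono (Filter.Eventually.of_forall fun x => max_le_add_of_nonneg
        zero_le zero_le)
    refine this.trans ?_
    rw [show (fun x => g₁ x + g₂ x) = g₁ + g₂ from rfl, withDensity_add_left hg₁,
      Measure.withDensity_rnDeriv_eq μ₁ m hac₁, Measure.withDensity_rnDeriv_eq μ₂ m hac₂]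
  have : IsFiniteMeasure ν :=
    ⟨lt_of_le_of_lt (hνle Set.univ) (measure_lt_top (μ₁ + μ₂) _)⟩
  have hνrn : ν.rnDeriv m =ᵐ[m] G := Measure.rnDeriv_withDensity m hGmeas
  have hμ₁'ν : μ₁' ≤ ν := h₁u.trans (sup_le hle₁ hle₂)
  have hμ₂'ν : μ₂' ≤ ν := h₂u.trans (sup_le hle₁ hle₂)
  -- a.e. upper bounds
  have hub₁ : μ₁'.rnDeriv m ≤ᵐ[m] G := by
    filter_upwards [aux_rnDeriv_mono hνm hμ₁'ν, hνrn] with x h1 h2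
    exact h1.trans h2.le
  have hub₂ : μ₂'.rnDeriv m ≤ᵐ[m] G := by
    filter_upwards [aux_rnDeriv_mono hνm hμ₂'ν, hνrn] with x h1 h2
    exact h1.trans h2.le
  -- a.e. sum identity
  have hsum_ae : (fun x => μ₁'.rnDeriv m x + μ₂'.rnDeriv m x)
      =ᵐ[m] fun x => g₁ x + g₂ x := by
    have h1 := Measure.rnDeriv_add μ₁' μ₂' m
    have h2 := Measure.rnDeriv_add μ₁ μ₂ m
    rw [hsum] at h1
    filter_upwards [h1, h2] with x hx1 hx2
    simp only [Pi.add_apply] at hx1 hx2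
    rw [← hx1, hx2]
  -- a.e. finiteness
  have hfin₁ := Measure.rnDeriv_lt_top μ₁ m
  have hfin₂ := Measure.rnDeriv_lt_top μ₂ m
  have hfin₁' := Measure.rnDeriv_lt_top μ₁' m
  have hfin₂' := Measure.rnDeriv_lt_top μ₂' m
  -- pointwise inequality a.e.
  have hpt : (fun x => ENNReal.ofReal (f ((μ₁'.rnDeriv m x).toReal))
        + ENNReal.ofReal (f ((μ₂'.rnDeriv m x).toReal)))
      ≤ᵐ[m] fun x => ENNReal.ofReal (f ((g₁ x).toReal))
        + ENNReal.ofReal (f ((g₂ x).toReal)) := by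
    filter_upwards [hub₁, hub₂, hsum_ae, hfin₁, hfin₂, hfin₁', hfin₂']
      with x hx1 hx2 hxs hf1 hf2 hf1' hf2'
    set a := (g₁ x).toReal
    set b := (g₂ x).toReal
    set u := (μ₁'.rnDeriv m x).toReal
    set v := (μ₂'.rnDeriv m x).toReal
    have hGfin : G x ≠ ⊤ := by
      simp only [hG, ne_eq, max_eq_top, not_or]
      exact ⟨hf1.ne, hf2.ne⟩
    have hmax : (G x).toReal = max a b := by
      rcases le_total (g₁ x) (g₂ x) with h | h
      · have hGx : G x = g₂ x := max_eq_right h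
        rw [hGx]; exact (max_eq_right (ENNReal.toReal_mono hf2.ne h)).symm
      · have hGx : G x = g₁ x := max_eq_left h
        rw [hGx]; exact (max_eq_left (ENNReal.toReal_mono hf1.ne h)).symm
    have hu_le : u ≤ max a b := hmax ▸ ENNReal.toReal_mono hGfin hx1
    have hv_le : v ≤ max a b := hmax ▸ ENNReal.toReal_mono hGfin hx2
    have hsum_real : u + v = a + b := by
      have := congrArg ENNReal.toReal hxs
      rwa [ENNReal.toReal_add hf1'.ne hf2'.ne, ENNReal.toReal_add hf1.ne hf2.ne] at this
    have ha : 0 ≤ a := ENNReal.toReal_nonneg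
    have hb : 0 ≤ b := ENNReal.toReal_nonneg
    have hu : 0 ≤ u := ENNReal.toReal_nonneg
    have hv : 0 ≤ v := ENNReal.toReal_nonneg
    have key : f u + f v ≤ f a + f b := by
      rcases le_total a b with hab | hab
      · have hmaxb : max a b = b := max_eq_right hab
        have hau : a ≤ u := by rw [hmaxb] at hv_le; linarith
        exact aux_convex_add_le f hconv ha hab hau (hmaxb ▸ hu_le) hsum_real
      · have hmaxa : max a b = a := max_eq_left hab
        have hbu : b ≤ u := by rw [hmaxa] at hv_le; linarith
        have : f u + f v ≤ f b + f a := by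
          refine aux_convex_add_le f hconv hb hab hbu (hmaxa ▸ hu_le) (by linarith)
        linarith
    calc ENNReal.ofReal (f u) + ENNReal.ofReal (f v)
        = ENNReal.ofReal (f u + f v) := (ENNReal.ofReal_add (hnonneg u hu) (hnonneg v hv)).symm
      _ ≤ ENNReal.ofReal (f a + f b) := ENNReal.ofReal_le_ofReal key
      _ = ENNReal.ofReal (f a) + ENNReal.ofReal (f b) :=
          ENNReal.ofReal_add (hnonneg a ha) (hnonneg b hb)
  -- assemble
  calc (∫⁻ x, ENNReal.ofReal (f ((μ₁'.rnDeriv m x).toReal)) ∂m) +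
        (∫⁻ x, ENNReal.ofReal (f ((μ₂'.rnDeriv m x).toReal)) ∂m)
      ≤ ∫⁻ x, (ENNReal.ofReal (f ((μ₁'.rnDeriv m x).toReal))
          + ENNReal.ofReal (f ((μ₂'.rnDeriv m x).toReal))) ∂m := le_lintegral_add _ _
    _ ≤ ∫⁻ x, (ENNReal.ofReal (f ((g₁ x).toReal))
          + ENNReal.ofReal (f ((g₂ x).toReal))) ∂m := lintegral_mono_ae hpt
    _ = (∫⁻ x, ENNReal.ofReal (f ((g₁ x).toReal)) ∂m) +
        (∫⁻ x, ENNReal.ofReal (f ((g₂ x).toReal)) ∂m) :=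
          lintegral_add_left (aux_measurable f hconv hg₁) _
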